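/- For any word x over {(, ), [, ]} and the 'mark and separate' homomorphism h defined by h('(') = '(a', h(')') = 'b)', h('[') = '[c', h(']') = 'd]', the word x is in the Dyck language D₂ if and only if h(x) is in the language DD₂ generated by the grammar S → (aSb) | [cSd] | SS | (ab) | [cd]. -/

import Mathlib

/-- The alphabet `{(, ), [, ], a, b, c, d}`. -/
inductive Sym8 : Type
  | lp | rp | lb | rb | a | b | c | d
deriving DecidableEq

/-- The ε-free Dyck language `D₂` over the bracket symbols. -/
inductive D2 : List Sym8 → Prop
  | paren {w : List Sym8} : D2 w → D2 ([Sym8.lp] ++ w ++ [Sym8.rp])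
  | brack {w : List Sym8} : D2 w → D2 ([Sym8.lb] ++ w ++ [Sym8.rb])
  | app {u v : List Sym8} : D2 u → D2 v → D2 (u ++ v)
  | base1 : D2 [Sym8.lp, Sym8.rp]
  | base2 : D2 [Sym8.lb, Sym8.rb]

/-- The language `DD₂` generated by `S → (aSb) | [cSd] | SS | (ab) | [cd]`. -/
inductive DD2 : List Sym8 → Prop
  | paren {w : List Sym8} : DD2 w → DD2 ([Sym8.lp, Sym8.a] ++ w ++ [Sym8.b, Sym8.rp])
  | brack {w : List Sym8} : DD2 w → DD2 ([Sym8.lb, Sym8.c] ++ w ++ [Sym8.d, Sym8.rb])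
  | app {u v : List Sym8} : DD2 u → DD2 v → DD2 (u ++ v)
  | base1 : DD2 [Sym8.lp, Sym8.a, Sym8.b, Sym8.rp]
  | base2 : DD2 [Sym8.lb, Sym8.c, Sym8.d, Sym8.rb]

/-- The "mark and separate" homomorphism `h`:
`( ↦ (a`, `) ↦ b)`, `[ ↦ [c`, `] ↦ d]` (identity on the other symbols). -/
def h : Sym8 → List Sym8
  | Sym8.lp => [Sym8.lp, Sym8.a]
  | Sym8.rp => [Sym8.b, Sym8.rp]
  | Sym8.lb => [Sym8.lb, Sym8.c]
  | Sym8.rb => [Sym8.d, Sym8.rb]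
  | s => [s]


abbrev Br (s : Sym8) : Prop := s = Sym8.lp ∨ s = Sym8.rp ∨ s = Sym8.lb ∨ s = Sym8.rb

lemma h_inj : ∀ (x y : List Sym8), (∀ s ∈ x, Br s) → (∀ s ∈ y, Br s) →
    x.flatMap h = y.flatMap h → x = y := by
  intro x
  induction x with
  | nil =>
    intro y hx hy he
    cases y with
    | nil => rfl
    | cons s t =>
      exfalso
      rcases hy s (by simp) with h1 | h1 | h1 | h1 <;> subst h1 <;> simp [h, List.flatMap_cons] at he
  | cons s t ih =>
    intro y hx hy he
    cases y with
    | nil =>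
      exfalso
      rcases hx s (by simp) with h1 | h1 | h1 | h1 <;> subst h1 <;> simp [h, List.flatMap_cons] at he
    | cons s' t' =>
      rcases hx s (by simp) with h1 | h1 | h1 | h1 <;> subst h1 <;>
        rcases hy s' (by simp) with h2 | h2 | h2 | h2 <;> subst h2 <;>
        simp [h, List.flatMap_cons] at he <;>
        simp [ih t' (fun a ha => hx a (by simp [ha])) (fun a ha => hy a (by simp [ha])) he]

lemma dd2_decode {w : List Sym8} (hw : DD2 w) :
    ∃ y : List Sym8, (∀ s ∈ y, Br s) ∧ w = y.flatMap h ∧ D2 y := by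
  induction hw with
  | paren _ ih =>
    obtain ⟨y, hy, rfl, hd⟩ := ih
    exact ⟨[Sym8.lp] ++ y ++ [Sym8.rp],
      by intro s hs; simp at hs; rcases hs with h1 | h1 | h1 <;> simp [Br, h1]; exact hy s h1,
      by simp [List.flatMap_append, List.flatMap_cons, h], D2.paren hd⟩
  | brack _ ih =>
    obtain ⟨y, hy, rfl, hd⟩ := ih
    exact ⟨[Sym8.lb] ++ y ++ [Sym8.rb],
      by intro s hs; simp at hs; rcases hs with h1 | h1 | h1 <;> simp [Br, h1]; exact hy s h1,
      by simp [List.flatMap_append, List.flatMap_cons, h], D2.brack hd⟩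
  | app _ _ ih1 ih2 =>
    obtain ⟨y1, hy1, rfl, hd1⟩ := ih1
    obtain ⟨y2, hy2, rfl, hd2⟩ := ih2
    exact ⟨y1 ++ y2,
      by intro s hs; simp at hs; rcases hs with h1 | h1; exacts [hy1 s h1, hy2 s h1],
      by simp [List.flatMap_append], D2.app hd1 hd2⟩
  | base1 =>
    exact ⟨[Sym8.lp, Sym8.rp], by intro s hs; simp at hs; rcases hs with h1 | h1 <;> simp [Br, h1],
      by simp [List.flatMap_cons, h], D2.base1⟩
  | base2 =>
    exact ⟨[Sym8.lb, Sym8.rb], by intro s hs; simp at hs; rcases hs with h1 | h1 <;> simp [Br, h1],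
      by simp [List.flatMap_cons, h], D2.base2⟩

lemma d2_encode {x : List Sym8} (hd : D2 x) : DD2 (x.flatMap h) := by
  induction hd with
  | paren _ ih => simpa [List.flatMap_append, List.flatMap_cons, h] using DD2.paren ih
  | brack _ ih => simpa [List.flatMap_append, List.flatMap_cons, h] using DD2.brack ih
  | app _ _ ih1 ih2 => simpa [List.flatMap_append] using DD2.app ih1 ih2
  | base1 => simpa [List.flatMap_cons, h] using DD2.base1
  | base2 => simpa [List.flatMap_cons, h] using DD2.base2

/-- For any word `x` over the bracket symbols: `x ∈ D₂` iff `h(x) ∈ DD₂`. -/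
theorem stmt8 (x : List Sym8)
    (hx : ∀ s ∈ x, s = Sym8.lp ∨ s = Sym8.rp ∨ s = Sym8.lb ∨ s = Sym8.rb) :
    D2 x ↔ DD2 (x.flatMap h) := by
  constructor
  · exact d2_encode
  · intro hw
    obtain ⟨y, hy, he, hd⟩ := dd2_decode hw
    rwa [h_inj x y hx hy he]
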